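/- Kloosterman's bound: For every finite field F_q with q elements, every nontrivial additive character ψ : (F_q,+) → ℂˣ and every a ∈ F_q^×, one has |Kl_2(a, q)| < 2 q^{3/4}. -/

import Mathlib

open Finset
open scoped Classical

/-- The Kloosterman sum `Kl_2(a, q) = ∑_{x ∈ F_q^×} ψ(x + a x⁻¹)`. -/
noncomputable def Kl2 {F : Type*} [Field F] [Fintype F]
    (ψ : AddChar F ℂ) (a : Fˣ) : ℂ :=
  ∑ x : Fˣ, ψ ((x : F) + (a : F) * (x : F)⁻¹)

namespace KloostermanAux

variable {F : Type*} [Field F] [Fintype F]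

/-- The twisted Kloosterman-type sum `T(m,n) = ∑_{x ∈ F^×} ψ(m x + n x⁻¹)`. -/
noncomputable def T (ψ : AddChar F ℂ) (m n : F) : ℂ :=
  ∑ x : Fˣ, ψ (m * (x : F) + n * ((x : F))⁻¹)

/-- First linear form in the fourth-moment expansion. -/
def A (p : (Fˣ × Fˣ) × (Fˣ × Fˣ)) : F :=
  (p.1.1 : F) + (p.1.2 : F) - (p.2.1 : F) - (p.2.2 : F)

/-- Second linear form in the fourth-moment expansion. -/
def B (p : (Fˣ × Fˣ) × (Fˣ × Fˣ)) : F :=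
  ((p.1.1 : F))⁻¹ + ((p.1.2 : F))⁻¹ - ((p.2.1 : F))⁻¹ - ((p.2.2 : F))⁻¹

lemma sum_mul_sum_prod {α β : Type*} [Fintype α] [Fintype β] (f : α → ℂ) (g : β → ℂ) :
    (∑ x, f x) * (∑ y, g y) = ∑ p : α × β, f p.1 * g p.2 := by
  rw [Fintype.sum_mul_sum]
  exact (Fintype.sum_prod_type (f := fun p : α × β => f p.1 * g p.2)).symm

lemma conj_T (ψ : AddChar F ℂ) (m n : F) :
    (starRingEnd ℂ) (T ψ m n) = ∑ x : Fˣ, ψ (-(m * (x : F) + n * ((x : F))⁻¹)) := by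
  have hchar : 0 < ringChar F := Nat.pos_of_ne_zero (CharP.ringChar_ne_zero_of_finite F)
  rw [T, map_sum]
  exact Finset.sum_congr rfl fun x _ => by
    rw [AddChar.starComp_apply hchar, AddChar.inv_apply]

lemma T_expand (ψ : AddChar F ℂ) (m n : F) :
    T ψ m n * T ψ m n * ((starRingEnd ℂ) (T ψ m n) * (starRingEnd ℂ) (T ψ m n)) =
      ∑ p : (Fˣ × Fˣ) × (Fˣ × Fˣ), ψ (m * A p + n * B p) := by
  rw [conj_T]
  rw [show T ψ m n = ∑ x : Fˣ, ψ (m * (x : F) + n * ((x : F))⁻¹) from rfl]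
  rw [sum_mul_sum_prod, sum_mul_sum_prod, sum_mul_sum_prod]
  refine Finset.sum_congr rfl fun p _ => ?_
  simp only [← AddChar.map_add_eq_mul]
  congr 1
  simp only [A, B]
  ring

lemma orth (ψ : AddChar F ℂ) (hψ : ψ ≠ 1) (c : F) :
    ∑ m : F, ψ (m * c) = if c = 0 then (Fintype.card F : ℂ) else 0 := by
  rw [AddChar.sum_mulShift c (AddChar.IsPrimitive.of_ne_one hψ)]
  split_ifs <;> simp

lemma norm_pow4 (z : ℂ) :
    ((‖z‖ ^ 4 : ℝ) : ℂ) = z * z * ((starRingEnd ℂ) z * (starRingEnd ℂ) z) := by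
  have h1 : z * z * ((starRingEnd ℂ) z * (starRingEnd ℂ) z)
      = (z * (starRingEnd ℂ) z) * (z * (starRingEnd ℂ) z) := by ring
  rw [h1, Complex.mul_conj]
  norm_cast
  rw [Complex.normSq_eq_norm_sq]
  ring

lemma sum_T4 (ψ : AddChar F ℂ) (hψ : ψ ≠ 1) :
    ∑ p : F × F, (‖T ψ p.1 p.2‖ ^ 4 : ℝ) = (Fintype.card F : ℝ) ^ 2 *
      (Finset.univ.filter fun p : (Fˣ × Fˣ) × (Fˣ × Fˣ) => A p = 0 ∧ B p = 0).card := by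
  have key : ∑ p : F × F, ((‖T ψ p.1 p.2‖ ^ 4 : ℝ) : ℂ) = (Fintype.card F : ℂ) ^ 2 *
      (Finset.univ.filter fun p : (Fˣ × Fˣ) × (Fˣ × Fˣ) => A p = 0 ∧ B p = 0).card := by
    calc ∑ p : F × F, ((‖T ψ p.1 p.2‖ ^ 4 : ℝ) : ℂ)
        = ∑ p : F × F, ∑ t : (Fˣ × Fˣ) × (Fˣ × Fˣ), ψ (p.1 * A t + p.2 * B t) := by
          refine Finset.sum_congr rfl fun p _ => ?_
          rw [norm_pow4, T_expand]
      _ = ∑ t : (Fˣ × Fˣ) × (Fˣ × Fˣ), ∑ p : F × F, ψ (p.1 * A t + p.2 * B t) :=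
          Finset.sum_comm
      _ = ∑ t : (Fˣ × Fˣ) × (Fˣ × Fˣ),
            (∑ m : F, ψ (m * A t)) * (∑ n : F, ψ (n * B t)) := by
          refine Finset.sum_congr rfl fun t _ => ?_
          rw [sum_mul_sum_prod]
          exact Finset.sum_congr rfl fun p _ => AddChar.map_add_eq_mul ψ _ _
      _ = ∑ t : (Fˣ × Fˣ) × (Fˣ × Fˣ),
            (if A t = 0 ∧ B t = 0 then (Fintype.card F : ℂ) ^ 2 else 0) := by
          refine Finset.sum_congr rfl fun t _ => ?_
          rw [orth ψ hψ, orth ψ hψ]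
          by_cases h1 : A t = 0 <;> by_cases h2 : B t = 0 <;> simp [h1, h2, sq]
      _ = (Fintype.card F : ℂ) ^ 2 *
            (Finset.univ.filter fun p : (Fˣ × Fˣ) × (Fˣ × Fˣ) => A p = 0 ∧ B p = 0).card := by
          rw [← Finset.sum_filter]
          rw [Finset.sum_const, nsmul_eq_mul, mul_comm]
  exact_mod_cast key

lemma fiber_subst {y z : Fˣ × Fˣ} (h : A (y, z) = 0) :
    (z.2 : F) = (y.1 : F) + (y.2 : F) - (z.1 : F) := by
  simp only [A] at h
  linear_combination -h

lemma fiber_fst_inj {y : Fˣ × Fˣ} {z z' : Fˣ × Fˣ} (h : A (y, z) = 0) (h' : A (y, z') = 0)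
    (hfst : z.1 = z'.1) : z = z' := by
  have h2 : (z.2 : F) = (z'.2 : F) := by
    rw [fiber_subst h, fiber_subst h', hfst]
  exact Prod.ext hfst (Units.ext h2)

lemma fiber_card_le_all (y : Fˣ × Fˣ) :
    (Finset.univ.filter fun z : Fˣ × Fˣ => A (y, z) = 0 ∧ B (y, z) = 0).card
      ≤ Fintype.card Fˣ := by
  have : (Finset.univ.filter fun z : Fˣ × Fˣ => A (y, z) = 0 ∧ B (y, z) = 0).card
      ≤ (Finset.univ : Finset Fˣ).card := by
    refine Finset.card_le_card_of_injOn (fun z => z.1) (fun z _ => Finset.mem_univ _) ?_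
    intro z hz z' hz' hfst
    simp only [Finset.mem_coe, Finset.mem_filter] at hz hz'
    exact fiber_fst_inj hz.2.1 hz'.2.1 hfst
  simpa using this

lemma fiber_quadratic {y z : Fˣ × Fˣ} (hA : A (y, z) = 0) (hB : B (y, z) = 0) :
    ((y.1 : F)⁻¹ + (y.2 : F)⁻¹) * ((z.1 : F) *
      (((y.1 : F) + (y.2 : F)) - (z.1 : F))) = (y.1 : F) + (y.2 : F) := by
  have hz2 : (z.2 : F) = (y.1 : F) + (y.2 : F) - (z.1 : F) := fiber_subst hA
  have hB' : (z.1 : F)⁻¹ + (z.2 : F)⁻¹ = (y.1 : F)⁻¹ + (y.2 : F)⁻¹ := by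
    simp only [B] at hB
    linear_combination -hB
  have hz1 : (z.1 : F) ≠ 0 := Units.ne_zero _
  have hz2ne : (z.2 : F) ≠ 0 := Units.ne_zero _
  have key : ((z.1 : F)⁻¹ + (z.2 : F)⁻¹) * ((z.1 : F) * (z.2 : F))
      = (z.1 : F) + (z.2 : F) := by
    field_simp
    ring
  rw [hB'] at key
  rw [← hz2, key, hz2]
  ring

lemma fiber_card_le_two (y : Fˣ × Fˣ) (ht : (y.1 : F)⁻¹ + (y.2 : F)⁻¹ ≠ 0) :
    (Finset.univ.filter fun z : Fˣ × Fˣ => A (y, z) = 0 ∧ B (y, z) = 0).card ≤ 2 := by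
  set s : F := (y.1 : F) + (y.2 : F) with hs
  set t : F := (y.1 : F)⁻¹ + (y.2 : F)⁻¹ with htdef
  by_contra hcon
  push_neg at hcon
  obtain ⟨z1, z2, z3, h1, h2, h3, h12, h13, h23⟩ := Finset.two_lt_card_iff.mp hcon
  simp only [Finset.mem_filter] at h1 h2 h3
  have q1 := fiber_quadratic h1.2.1 h1.2.2
  have q2 := fiber_quadratic h2.2.1 h2.2.2
  have q3 := fiber_quadratic h3.2.1 h3.2.2
  have hd12 : (z1.1 : F) ≠ (z2.1 : F) := fun h => h12 (fiber_fst_inj h1.2.1 h2.2.1 (Units.ext h))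
  have hd13 : (z1.1 : F) ≠ (z3.1 : F) := fun h => h13 (fiber_fst_inj h1.2.1 h3.2.1 (Units.ext h))
  have hd23 : (z2.1 : F) ≠ (z3.1 : F) := fun h => h23 (fiber_fst_inj h2.2.1 h3.2.1 (Units.ext h))
  have pair : ∀ x x' : F, t * (x * (s - x)) = s → t * (x' * (s - x')) = s → x ≠ x' →
      x + x' = s := by
    intro x x' hx hx' hne
    have hfac : t * (x - x') * (s - (x + x')) = 0 := by linear_combination hx - hx'
    rcases mul_eq_zero.mp hfac with h | h
    · rcases mul_eq_zero.mp h with h' | h'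
      · exact absurd h' ht
      · exact absurd (sub_eq_zero.mp h') hne
    · linear_combination -h
  have e12 : (z1.1 : F) + (z2.1 : F) = s := pair _ _ q1 q2 hd12
  have e13 : (z1.1 : F) + (z3.1 : F) = s := pair _ _ q1 q3 hd13
  have : (z2.1 : F) = (z3.1 : F) := by linear_combination e12 - e13
  exact hd23 this

lemma count_t_zero :
    (Finset.univ.filter fun y : Fˣ × Fˣ => (y.1 : F)⁻¹ + (y.2 : F)⁻¹ = 0).card
      ≤ Fintype.card Fˣ := by
  have : (Finset.univ.filter fun y : Fˣ × Fˣ => (y.1 : F)⁻¹ + (y.2 : F)⁻¹ = 0).card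
      ≤ (Finset.univ : Finset Fˣ).card := by
    refine Finset.card_le_card_of_injOn (fun y => y.1) (fun y _ => Finset.mem_univ _) ?_
    intro y hy y' hy' hfst
    simp only [Finset.mem_coe, Finset.mem_filter] at hy hy'
    have h2 : ((y.2 : F))⁻¹ = ((y'.2 : F))⁻¹ := by
      have e1 : ((y.2 : F))⁻¹ = -((y.1 : F))⁻¹ := by linear_combination hy.2
      have e2 : ((y'.2 : F))⁻¹ = -((y'.1 : F))⁻¹ := by linear_combination hy'.2
      have hfst' : y.1 = y'.1 := hfst
      rw [e1, e2, hfst']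
    exact Prod.ext hfst (Units.ext (inv_injective h2))
  simpa using this

lemma count_le :
    (Finset.univ.filter fun p : (Fˣ × Fˣ) × (Fˣ × Fˣ) => A p = 0 ∧ B p = 0).card
      ≤ 3 * (Fintype.card Fˣ) ^ 2 := by
  set u := Fintype.card Fˣ with hu
  have hsplit : (Finset.univ.filter fun p : (Fˣ × Fˣ) × (Fˣ × Fˣ) => A p = 0 ∧ B p = 0).card
      = ∑ y : Fˣ × Fˣ,
        (Finset.univ.filter fun z : Fˣ × Fˣ => A (y, z) = 0 ∧ B (y, z) = 0).card := by
    rw [Finset.card_filter, Fintype.sum_prod_type]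
    exact Finset.sum_congr rfl fun y _ => (Finset.card_filter _ _).symm
  rw [hsplit]
  set P : Fˣ × Fˣ → Prop := fun y => (y.1 : F)⁻¹ + (y.2 : F)⁻¹ = 0 with hP
  rw [← Finset.sum_filter_add_sum_filter_not Finset.univ P]
  have hb1 : ∑ y ∈ Finset.univ.filter P,
      (Finset.univ.filter fun z : Fˣ × Fˣ => A (y, z) = 0 ∧ B (y, z) = 0).card
      ≤ u * u := by
    calc ∑ y ∈ Finset.univ.filter P,
          (Finset.univ.filter fun z : Fˣ × Fˣ => A (y, z) = 0 ∧ B (y, z) = 0).card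
        ≤ ∑ _y ∈ Finset.univ.filter P, u :=
          Finset.sum_le_sum fun y _ => fiber_card_le_all y
      _ = (Finset.univ.filter P).card * u := by rw [Finset.sum_const, smul_eq_mul]
      _ ≤ u * u := Nat.mul_le_mul_right _ count_t_zero
  have hb2 : ∑ y ∈ Finset.univ.filter (fun y => ¬ P y),
      (Finset.univ.filter fun z : Fˣ × Fˣ => A (y, z) = 0 ∧ B (y, z) = 0).card
      ≤ u * u * 2 := by
    calc ∑ y ∈ Finset.univ.filter (fun y => ¬ P y),
          (Finset.univ.filter fun z : Fˣ × Fˣ => A (y, z) = 0 ∧ B (y, z) = 0).card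
        ≤ ∑ _y ∈ Finset.univ.filter (fun y => ¬ P y), 2 :=
          Finset.sum_le_sum fun y hy => by
            refine fiber_card_le_two y ?_
            simpa [hP] using (Finset.mem_filter.mp hy).2
      _ = (Finset.univ.filter (fun y => ¬ P y)).card * 2 := by
          rw [Finset.sum_const, smul_eq_mul]
      _ ≤ (Fintype.card (Fˣ × Fˣ)) * 2 := by
          exact Nat.mul_le_mul_right _ (le_trans (Finset.card_filter_le _ _) (le_of_eq Finset.card_univ))
      _ = u * u * 2 := by rw [Fintype.card_prod]
  calc _ ≤ u * u + u * u * 2 := Nat.add_le_add hb1 hb2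
    _ = 3 * u ^ 2 := by ring

lemma T_eq_Kl2 (ψ : AddChar F ℂ) (a m : Fˣ) :
    T ψ (m : F) ((a * m⁻¹ : Fˣ) : F) = Kl2 ψ a := by
  rw [T, Kl2]
  refine (Fintype.sum_bijective (fun y : Fˣ => m⁻¹ * y)
    (Group.mulLeft_bijective m⁻¹) _ _ fun y => ?_).symm
  congr 1
  have hm : (m : F) ≠ 0 := Units.ne_zero m
  have hy : (y : F) ≠ 0 := Units.ne_zero y
  push_cast [Units.val_mul, Units.val_inv_eq_inv_val]
  field_simp

lemma lower_bound (ψ : AddChar F ℂ) (a : Fˣ) :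
    (Fintype.card Fˣ : ℝ) * ‖Kl2 ψ a‖ ^ 4 ≤ ∑ p : F × F, ‖T ψ p.1 p.2‖ ^ 4 := by
  have hinj : ∀ m ∈ (Finset.univ : Finset Fˣ), ∀ m' ∈ (Finset.univ : Finset Fˣ),
      ((fun m : Fˣ => (((m : F), ((a * m⁻¹ : Fˣ) : F)) : F × F)) m =
        (fun m : Fˣ => (((m : F), ((a * m⁻¹ : Fˣ) : F)) : F × F)) m') → m = m' := by
    intro m _ m' _ h
    exact Units.ext (congrArg Prod.fst h)
  have himg : ∑ p ∈ (Finset.univ.image fun m : Fˣ => (((m : F), ((a * m⁻¹ : Fˣ) : F)) : F × F)),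
      ‖T ψ p.1 p.2‖ ^ 4 = ∑ m : Fˣ, ‖T ψ (m : F) ((a * m⁻¹ : Fˣ) : F)‖ ^ 4 :=
    Finset.sum_image hinj
  have hval : ∑ m : Fˣ, ‖T ψ (m : F) ((a * m⁻¹ : Fˣ) : F)‖ ^ 4
      = (Fintype.card Fˣ : ℝ) * ‖Kl2 ψ a‖ ^ 4 := by
    rw [Finset.sum_congr rfl fun m _ => by rw [T_eq_Kl2 ψ a m]]
    rw [Finset.sum_const, Finset.card_univ, nsmul_eq_mul]
  rw [← hval, ← himg]
  refine Finset.sum_le_sum_of_subset_of_nonneg (Finset.subset_univ _) ?_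
  intro p _ _
  positivity

end KloostermanAux

open KloostermanAux in
/-- **Kloosterman's bound.** For every finite field `F_q`, every nontrivial additive
character `ψ` and every `a ∈ F_q^×`, `|Kl_2(a, q)| < 2 q^{3/4}`. -/
theorem kloosterman_bound
    {F : Type*} [Field F] [Fintype F] (ψ : AddChar F ℂ) (hψ : ψ ≠ 1) (a : Fˣ) :
    ‖Kl2 ψ a‖ < 2 * (Fintype.card F : ℝ) ^ ((3 : ℝ) / 4) := by
  classical
  set q := Fintype.card F with hq
  set u := Fintype.card Fˣ with hu
  have hq2 : 2 ≤ q := Fintype.one_lt_card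
  have huq : u = q - 1 := Fintype.card_units (α := F)
  have hu1 : 1 ≤ u := by omega
  set K := ‖Kl2 ψ a‖ with hK
  have hKnn : 0 ≤ K := norm_nonneg _
  -- main moment bound
  have h1 : (u : ℝ) * K ^ 4 ≤ (q : ℝ) ^ 2 * (3 * u ^ 2) := by
    calc (u : ℝ) * K ^ 4 ≤ ∑ p : F × F, ‖T ψ p.1 p.2‖ ^ 4 := lower_bound ψ a
      _ = (q : ℝ) ^ 2 *
          (Finset.univ.filter fun p : (Fˣ × Fˣ) × (Fˣ × Fˣ) => A p = 0 ∧ B p = 0).card :=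
          sum_T4 ψ hψ
      _ ≤ (q : ℝ) ^ 2 * (3 * u ^ 2) := by
          have := count_le (F := F)
          have hcast : ((Finset.univ.filter
              fun p : (Fˣ × Fˣ) × (Fˣ × Fˣ) => A p = 0 ∧ B p = 0).card : ℝ)
              ≤ 3 * (u : ℝ) ^ 2 := by exact_mod_cast this
          have hq0 : (0 : ℝ) ≤ (q : ℝ) ^ 2 := by positivity
          nlinarith
  have hqR : (2 : ℝ) ≤ (q : ℝ) := by exact_mod_cast hq2
  have huR : (u : ℝ) = (q : ℝ) - 1 := by
    rw [huq]
    push_cast [Nat.cast_sub (by omega : 1 ≤ q)]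
    ring
  have huRpos : (0 : ℝ) < (u : ℝ) := by rw [huR]; linarith
  -- K^4 < 16 q^3
  have h2 : K ^ 4 < 16 * (q : ℝ) ^ 3 := by
    have h3 : K ^ 4 ≤ 3 * (q : ℝ) ^ 2 * u := by
      calc K ^ 4 = ((u : ℝ) * K ^ 4) / u := by field_simp
        _ ≤ ((q : ℝ) ^ 2 * (3 * u ^ 2)) / u := by gcongr
        _ = 3 * (q : ℝ) ^ 2 * u := by field_simp
    nlinarith [h3, huR, hqR]
  -- conclude
  have hrhs : (2 * (q : ℝ) ^ ((3 : ℝ) / 4)) ^ 4 = 16 * (q : ℝ) ^ 3 := by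
    have hq0 : (0 : ℝ) ≤ (q : ℝ) := by linarith
    rw [mul_pow, ← Real.rpow_natCast ((q : ℝ) ^ ((3 : ℝ) / 4)) 4, ← Real.rpow_mul hq0]
    norm_num
  have hfin : K ^ 4 < (2 * (q : ℝ) ^ ((3 : ℝ) / 4)) ^ 4 := by rw [hrhs]; exact h2
  exact lt_of_pow_lt_pow_left₀ 4 (by positivity) hfin
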